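/- An element x of the group ring ℤ[ℚ/ℤ] is fixed by every automorphism of ℚ/ℤ (acting on basis elements by e(γ) ↦ e(g(γ)) for g ∈ Aut(ℚ/ℤ)) if and only if x lies in the ℤ-linear span of the elements ρ(n) = Σ_{γ of exact additive order n} e(γ), n ≥ 1; in other words, the elements ρ(n) generate the invariant part ℤ[ℚ/ℤ]^G of the group ring under the action of G = Aut(ℚ/ℤ). -/

import Mathlib

open scoped Classical

/-- `ℚ/ℤ`, the quotient of the additive group of rationals by the integers. -/
abbrev QZ : Type := ℚ ⧸ AddSubgroup.zmultiples (1 : ℚ)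

/-- The group ring `ℤ[ℚ/ℤ]`. -/
abbrev RQZ : Type := AddMonoidAlgebra ℤ QZ

/-- The basis element `e(γ)` of the group ring `ℤ[ℚ/ℤ]`. -/
noncomputable def e (γ : QZ) : RQZ := AddMonoidAlgebra.single γ 1

/-- `τ(C(n)) = ∑_{n • γ = 0} e(γ)`, the sum of basis elements over the `n`-torsion. -/
noncomputable def tauC (n : ℕ) : RQZ := ∑ᶠ γ ∈ {γ : QZ | n • γ = 0}, e γ

/-- `ρ(d) = ∑_{γ of exact additive order d} e(γ)`. -/
noncomputable def rhoE (d : ℕ) : RQZ := ∑ᶠ γ ∈ {γ : QZ | addOrderOf γ = d}, e γ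

lemma mem_zmul (x : ℚ) : x ∈ AddSubgroup.zmultiples (1 : ℚ) ↔ ∃ z : ℤ, (z : ℚ) = x := by
  simp [AddSubgroup.mem_zmultiples_iff]

lemma QZ.mk_eq_zero {q : ℚ} (h : ∃ z : ℤ, (z : ℚ) = q) :
    (QuotientAddGroup.mk q : QZ) = 0 := by
  rw [QuotientAddGroup.eq_zero_iff, mem_zmul]; exact h

lemma QZ.nsmul_mk (n : ℕ) (q : ℚ) :
    n • (QuotientAddGroup.mk q : QZ) = QuotientAddGroup.mk (n • q) := by
  simp

lemma QZ.torsion (γ : QZ) : ∃ n : ℕ, 0 < n ∧ n • γ = 0 := by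
  induction γ using QuotientAddGroup.induction_on with
  | H q =>
    refine ⟨q.den, q.pos, ?_⟩
    rw [QZ.nsmul_mk]
    apply QZ.mk_eq_zero
    exact ⟨q.num, by rw [nsmul_eq_mul]; exact_mod_cast (Rat.den_mul_eq_num q).symm⟩

lemma QZ.addOrderOf_pos (γ : QZ) : 0 < addOrderOf γ := by
  rw [addOrderOf_pos_iff, isOfFinAddOrder_iff_nsmul_eq_zero]
  exact QZ.torsion γ

lemma QZ.torsion_finite {d : ℕ} (hd : 0 < d) : {γ : QZ | d • γ = 0}.Finite := by
  have : NeZero d := ⟨hd.ne'⟩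
  apply Set.Finite.subset (Set.finite_range
    (fun k : ZMod d => (QuotientAddGroup.mk ((k.val : ℚ) / d) : QZ)))
  rintro γ hγ
  induction γ using QuotientAddGroup.induction_on with
  | H q =>
    simp only [Set.mem_setOf_eq, QZ.nsmul_mk] at hγ
    rw [QuotientAddGroup.eq_zero_iff, mem_zmul] at hγ
    obtain ⟨z, hz⟩ := hγ
    refine ⟨(z : ZMod d), ?_⟩
    have hval : (d : ℤ) ∣ z - ((z : ZMod d).val : ℤ) := by
      have := ZMod.intCast_zmod_eq_zero_iff_dvd (z - ((z : ZMod d).val : ℤ)) d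
      rw [← this]
      push_cast
      simp [ZMod.intCast_cast]
    obtain ⟨m, hm⟩ := hval
    simp only
    symm
    rw [QuotientAddGroup.eq, ← sub_eq_neg_add]
    rw [mem_zmul]
    refine ⟨-m, ?_⟩
    have hd' : (d : ℚ) ≠ 0 := by exact_mod_cast hd.ne'
    have hq : q = (z : ℚ) / d := by
      rw [eq_div_iff hd', mul_comm]
      rw [nsmul_eq_mul] at hz
      exact_mod_cast hz.symm
    rw [hq, div_sub_div_same]
    rw [show (((z : ZMod d).val : ℚ)) - z = ((((z : ZMod d).val : ℤ) - z : ℤ) : ℚ) by push_cast; ring]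
    rw [show (((z : ZMod d).val : ℤ) - z : ℤ) = -((d : ℤ) * m) by omega]
    push_cast
    field_simp

lemma orderClass_finite (d : ℕ) (hd : 0 < d) : {γ : QZ | addOrderOf γ = d}.Finite := by
  apply Set.Finite.subset (QZ.torsion_finite hd)
  intro γ hγ
  simp only [Set.mem_setOf_eq] at *
  rw [← hγ]
  exact addOrderOf_nsmul_eq_zero γ

lemma rhoE_eq_sum (d : ℕ) (hd : 0 < d) :
    rhoE d = ∑ γ ∈ (orderClass_finite d hd).toFinset, e γ :=
  finsum_mem_eq_finite_toFinset_sum _ _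

lemma rhoE_apply (d : ℕ) (hd : 0 < d) (δ : QZ) :
    (rhoE d).coeff δ = if addOrderOf δ = d then 1 else 0 := by
  rw [rhoE_eq_sum d hd]
  rw [AddMonoidAlgebra.coeff_sum, Finsupp.finset_sum_apply]
  by_cases h : addOrderOf δ = d
  · rw [if_pos h, Finset.sum_eq_single δ]
    · simp [e, AddMonoidAlgebra.coeff_single, Finsupp.single_apply]
    · intro b _ hb
      simp [e, AddMonoidAlgebra.coeff_single, Finsupp.single_apply, hb]
    · intro hδ
      exact absurd (by simp [h]) (fun hh => hδ ((Set.Finite.mem_toFinset _).2 hh))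
  · rw [if_neg h]
    apply Finset.sum_eq_zero
    intro b hb
    rw [Set.Finite.mem_toFinset] at hb
    have : b ≠ δ := fun hbδ => h (by rw [← hbδ]; exact hb)
    simp [e, AddMonoidAlgebra.coeff_single, Finsupp.single_apply, this]

lemma isUnit_zmod_of_isCoprime {a : ℤ} {m : ℕ} (h : IsCoprime a (m : ℤ)) :
    IsUnit (a : ZMod m) := by
  obtain ⟨u, v, huv⟩ := h
  apply IsUnit.of_mul_eq_one (u : ZMod m)
  have : ((u * a + v * m : ℤ) : ZMod m) = 1 := by rw [huv]; simp
  push_cast at this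
  rw [ZMod.natCast_self] at this
  rw [mul_comm]
  simpa using this

lemma isCoprime_of_isUnit_zmod {a : ℤ} {m : ℕ} (hm : 0 < m) (h : IsUnit (a : ZMod m)) :
    IsCoprime a (m : ℤ) := by
  obtain ⟨u, hu⟩ := h
  have : NeZero m := ⟨hm.ne'⟩
  set v : ℤ := ((((u⁻¹ : (ZMod m)ˣ) : ZMod m)).val : ℤ)
  have hv : ((a * v - 1 : ℤ) : ZMod m) = 0 := by
    have h2 : ((v : ℤ) : ZMod m) = ((u⁻¹ : (ZMod m)ˣ) : ZMod m) := by
      simp [v]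
    push_cast at h2 ⊢
    rw [h2, ← hu]
    simp
  rw [ZMod.intCast_zmod_eq_zero_iff_dvd] at hv
  obtain ⟨k, hk⟩ := hv
  exact ⟨v, -k, by linarith⟩

lemma lift_coprime {a : ℤ} {m M : ℕ} (hm : 0 < m) (hM : 0 < M) (hdvd : m ∣ M)
    (h : IsCoprime a (m : ℤ)) : ∃ b : ℤ, IsCoprime b (M : ℤ) ∧ (m : ℤ) ∣ b - a := by
  have : NeZero M := ⟨hM.ne'⟩
  have : NeZero m := ⟨hm.ne'⟩
  obtain ⟨u₀, hu₀⟩ := isUnit_zmod_of_isCoprime h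
  obtain ⟨u, hu⟩ := ZMod.unitsMap_surjective hdvd u₀
  refine ⟨((u : ZMod M).val : ℤ), ?_, ?_⟩
  · apply isCoprime_of_isUnit_zmod hM
    rw [Int.cast_natCast, ZMod.natCast_val, ZMod.cast_id]
    exact u.isUnit
  · rw [← ZMod.intCast_zmod_eq_zero_iff_dvd]
    push_cast
    rw [ZMod.natCast_val]
    have hcast : (((u : ZMod M).cast : ZMod m)) = (a : ZMod m) := by
      have := congrArg (fun w : (ZMod m)ˣ => (w : ZMod m)) hu
      simpa [ZMod.unitsMap, ZMod.castHom_apply, hu₀] using this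
    rw [hcast]
    simp

lemma exists_w (n : ℕ) (hn : 0 < n) (c : ℤ) (hc : IsCoprime c (n : ℤ)) :
    ∃ w : ℕ → ℤ, (∀ j, IsCoprime (w j) ((j.factorial : ℕ) : ℤ)) ∧
      (∀ j, ((j.factorial : ℕ) : ℤ) ∣ w (j + 1) - w j) ∧ ((n : ℤ) ∣ w n - c) := by
  obtain ⟨b₀, hb₀, hb₀c⟩ := lift_coprime hn n.factorial_pos (Nat.dvd_factorial hn le_rfl) hc
  -- recursive sequence V j coprime to (n+j)!
  let step : ∀ j : ℕ, {b : ℤ // IsCoprime b (((n + j).factorial : ℕ) : ℤ)} →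
      {b : ℤ // IsCoprime b (((n + (j + 1)).factorial : ℕ) : ℤ)} := fun j p =>
    ⟨(lift_coprime (n + j).factorial_pos (n + (j + 1)).factorial_pos
        (Nat.factorial_dvd_factorial (by omega)) p.2).choose,
     (lift_coprime (n + j).factorial_pos (n + (j + 1)).factorial_pos
        (Nat.factorial_dvd_factorial (by omega)) p.2).choose_spec.1⟩
  let V : ∀ j : ℕ, {b : ℤ // IsCoprime b (((n + j).factorial : ℕ) : ℤ)} :=
    fun j => Nat.rec ⟨b₀, by simpa using hb₀⟩ step j
  have hVcomp : ∀ j, (((n + j).factorial : ℕ) : ℤ) ∣ (V (j + 1)).1 - (V j).1 := fun j =>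
    (lift_coprime (n + j).factorial_pos (n + (j + 1)).factorial_pos
        (Nat.factorial_dvd_factorial (by omega)) (V j).2).choose_spec.2
  refine ⟨fun j => if j ≤ n then (V 0).1 else (V (j - n)).1, ?_, ?_, ?_⟩
  · intro j
    dsimp only
    by_cases h : j ≤ n
    · rw [if_pos h]
      exact (V 0).2.of_isCoprime_of_dvd_right
        (by exact_mod_cast Int.natCast_dvd_natCast.2 (Nat.factorial_dvd_factorial (by omega)))
    · rw [if_neg h]
      have h4 : n + (j - n) = j := by omega
      have h5 : j.factorial = (n + (j - n)).factorial := by rw [h4]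
      rw [h5]
      exact (V (j - n)).2
  · intro j
    dsimp only
    by_cases h : j + 1 ≤ n
    · rw [if_pos h, if_pos (by omega : j ≤ n)]; simp
    · rw [if_neg (by omega : ¬ j + 1 ≤ n)]
      by_cases h2 : j ≤ n
      · -- j = n
        have hj : j = n := by omega
        subst hj
        rw [if_pos le_rfl, show j + 1 - j = 1 from by omega]
        simpa using hVcomp 0
      · rw [if_neg h2]
        have h3 : j + 1 - n = (j - n) + 1 := by omega
        rw [h3]
        have h4 : n + (j - n) = j := by omega
        have h5 : j.factorial = (n + (j - n)).factorial := by rw [h4]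
        rw [h5]
        exact hVcomp (j - n)
  · dsimp only
    rw [if_pos le_rfl]
    exact hb₀c

lemma exists_aut (n : ℕ) (hn : 0 < n) (c : ℤ) (hc : IsCoprime c (n : ℤ)) :
    ∃ g : QZ ≃+ QZ, ∀ γ : QZ, n • γ = 0 → g γ = c • γ := by
  obtain ⟨w, hwcop, hwcomp, hwc⟩ := exists_w n hn c hc
  -- chain congruence
  have chain : ∀ i j : ℕ, i ≤ j → ((i.factorial : ℕ) : ℤ) ∣ w j - w i := by
    intro i j hij
    induction j with
    | zero => simp [Nat.le_zero.1 hij]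
    | succ j ih =>
      rcases Nat.lt_or_ge i (j + 1) with h | h
      · have h1 : i ≤ j := by omega
        have ha := ih h1
        have hdf : ((i.factorial : ℕ) : ℤ) ∣ ((j.factorial : ℕ) : ℤ) :=
          Int.natCast_dvd_natCast.2 (Nat.factorial_dvd_factorial h1)
        have h2 : ((i.factorial : ℕ) : ℤ) ∣ w (j + 1) - w j := dvd_trans hdf (hwcomp j)
        have h3 := dvd_add h2 ha
        simpa using h3
      · have : i = j + 1 := by omega
        simp [this]
  -- the key well-definedness lemma
  have key : ∀ (γ : QZ) (k : ℕ), 0 < k → k • γ = 0 →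
      w (addOrderOf γ) • γ = w k • γ := by
    intro γ k hk hγ
    have hd : addOrderOf γ ∣ k := addOrderOf_dvd_of_nsmul_eq_zero hγ
    have hdpos := QZ.addOrderOf_pos γ
    have hdk : addOrderOf γ ≤ k := Nat.le_of_dvd hk hd
    have h1 : ((addOrderOf γ : ℕ) : ℤ) ∣ w k - w (addOrderOf γ) :=
      dvd_trans (Int.natCast_dvd_natCast.2 (Nat.dvd_factorial hdpos le_rfl)) (chain _ _ hdk)
    have h2 : (w k - w (addOrderOf γ)) • γ = 0 :=
      addOrderOf_dvd_iff_zsmul_eq_zero.1 h1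
    rw [sub_smul, sub_eq_zero] at h2
    exact h2.symm
  set f : QZ → QZ := fun γ => w (addOrderOf γ) • γ with hf
  have hadd : ∀ a b : QZ, f (a + b) = f a + f b := by
    intro a b
    obtain ⟨ka, hka, hka0⟩ := QZ.torsion a
    obtain ⟨kb, hkb, hkb0⟩ := QZ.torsion b
    have hk : 0 < ka * kb := Nat.mul_pos hka hkb
    have h1 : (ka * kb) • a = 0 := by rw [mul_nsmul, hka0, smul_zero]
    have h2 : (ka * kb) • b = 0 := by rw [mul_comm, mul_nsmul, hkb0, smul_zero]
    have h3 : (ka * kb) • (a + b) = 0 := by rw [smul_add, h1, h2, add_zero]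
    rw [hf]
    dsimp only
    rw [key a _ hk h1, key b _ hk h2, key (a + b) _ hk h3, smul_add]
  have hF : ∀ γ : QZ, ∀ k : ℕ, 0 < k → k • γ = 0 → f γ = w k • γ := by
    intro γ k hk h; exact key γ k hk h
  let F : QZ →+ QZ := AddMonoidHom.mk' f hadd
  have hinj : Function.Injective F := by
    intro a b hab
    rw [← sub_eq_zero, ← map_sub] at hab
    set γ := a - b
    have : w (addOrderOf γ) • γ = 0 := hab
    have hdvd : ((addOrderOf γ : ℕ) : ℤ) ∣ w (addOrderOf γ) :=
      addOrderOf_dvd_iff_zsmul_eq_zero.2 this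
    have hdpos := QZ.addOrderOf_pos γ
    have hcop : IsCoprime (w (addOrderOf γ)) ((addOrderOf γ : ℕ) : ℤ) :=
      (hwcop (addOrderOf γ)).of_isCoprime_of_dvd_right
        (Int.natCast_dvd_natCast.2 (Nat.dvd_factorial hdpos le_rfl))
    have : IsUnit ((addOrderOf γ : ℕ) : ℤ) := hcop.isUnit_of_dvd' hdvd dvd_rfl
    have h1 : addOrderOf γ = 1 := by
      rw [Int.isUnit_iff] at this
      omega
    have : γ = 0 := by
      have := addOrderOf_nsmul_eq_zero γ
      rw [h1, one_nsmul] at this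
      exact this
    rwa [sub_eq_zero] at this
  have hsurj : Function.Surjective F := by
    intro δ
    set d := addOrderOf δ with hdd
    have hdpos := QZ.addOrderOf_pos δ
    have hcop : IsCoprime (w d) ((d : ℕ) : ℤ) :=
      (hwcop d).of_isCoprime_of_dvd_right
        (Int.natCast_dvd_natCast.2 (Nat.dvd_factorial hdpos le_rfl))
    obtain ⟨u, v, huv⟩ := hcop
    refine ⟨u • δ, ?_⟩
    have hdsmul : d • (u • δ) = 0 := by
      rw [smul_comm]
      rw [addOrderOf_nsmul_eq_zero δ, smul_zero]
    have : F (u • δ) = w d • (u • δ) := hF (u • δ) d hdpos hdsmul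
    rw [this, smul_smul]
    have hδd : (d : ℤ) • δ = 0 := by
      rw [natCast_zsmul]; exact addOrderOf_nsmul_eq_zero δ
    calc (w d * u) • δ = (1 - v * d) • δ := by
            congr 1; linarith
      _ = δ - (v * d) • δ := by rw [sub_smul, one_smul]
      _ = δ := by rw [mul_smul, hδd, smul_zero, sub_zero]
  refine ⟨AddEquiv.ofBijective F ⟨hinj, hsurj⟩, ?_⟩
  intro γ hγ
  have h1 : (AddEquiv.ofBijective F ⟨hinj, hsurj⟩) γ = F γ := rfl
  rw [h1]
  have h2 : F γ = w n • γ := hF γ n hn hγ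
  rw [h2]
  have h3 : ((addOrderOf γ : ℕ) : ℤ) ∣ w n - c := by
    exact dvd_trans (Int.natCast_dvd_natCast.2 (addOrderOf_dvd_of_nsmul_eq_zero hγ)) hwc
  have h4 : (w n - c) • γ = 0 := addOrderOf_dvd_iff_zsmul_eq_zero.1 h3
  rw [sub_smul, sub_eq_zero] at h4
  exact h4

lemma QZ.torsion_rep {d : ℕ} (hd : 0 < d) {γ : QZ} (hγ : d • γ = 0) :
    ∃ k : ℕ, γ = k • (QuotientAddGroup.mk ((1 : ℚ) / d) : QZ) := by
  have : NeZero d := ⟨hd.ne'⟩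
  induction γ using QuotientAddGroup.induction_on with
  | H q =>
    rw [QZ.nsmul_mk, QuotientAddGroup.eq_zero_iff, mem_zmul] at hγ
    obtain ⟨z, hz⟩ := hγ
    rw [nsmul_eq_mul] at hz
    refine ⟨(z % d).toNat, ?_⟩
    have hd' : (d : ℚ) ≠ 0 := by exact_mod_cast hd.ne'
    rw [QZ.nsmul_mk]
    rw [QuotientAddGroup.eq, mem_zmul]
    refine ⟨-(z / d), ?_⟩
    have hq : q = (z : ℚ) / d := by rw [eq_div_iff hd', mul_comm]; exact_mod_cast hz.symm
    have htn : (((z % d).toNat : ℤ) : ℚ) = ((z % (d : ℤ) : ℤ) : ℚ) := by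
      congr 1
      exact Int.toNat_of_nonneg (Int.emod_nonneg z (by exact_mod_cast hd.ne'))
    have hsm : ((z % d).toNat : ℕ) • ((1 : ℚ) / d) = (((z % d).toNat : ℤ) : ℚ) / d := by
      rw [nsmul_eq_mul]
      push_cast
      ring
    rw [hsm, htn, hq]
    rw [Int.emod_def]
    push_cast
    field_simp
    ring

lemma exists_aut_map {γ δ : QZ} (h : addOrderOf γ = addOrderOf δ) :
    ∃ g : QZ ≃+ QZ, g γ = δ := by
  set n := addOrderOf γ with hn
  have hnpos : 0 < n := QZ.addOrderOf_pos γ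
  by_cases hn1 : n = 1
  · have hγ0 : γ = 0 := AddMonoid.addOrderOf_eq_one_iff.1 (hn.symm.trans hn1)
    have hδ0 : δ = 0 := AddMonoid.addOrderOf_eq_one_iff.1 ((h.symm.trans hn).trans hn1)
    exact ⟨AddEquiv.refl QZ, by rw [hγ0, hδ0]; simp⟩
  · have hn2 : 1 < n := by omega
    have : NeZero n := ⟨hnpos.ne'⟩
    set μ : QZ := (QuotientAddGroup.mk ((1 : ℚ) / n) : QZ) with hμ
    have hγt : n • γ = 0 := by rw [hn]; exact addOrderOf_nsmul_eq_zero γ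
    have hδt : n • δ = 0 := by rw [h]; exact addOrderOf_nsmul_eq_zero δ
    obtain ⟨k, hk⟩ := QZ.torsion_rep hnpos hγt
    obtain ⟨l, hl⟩ := QZ.torsion_rep hnpos hδt
    have hμt : n • μ = 0 := by
      rw [hμ, QZ.nsmul_mk]
      apply QZ.mk_eq_zero
      refine ⟨1, ?_⟩
      rw [nsmul_eq_mul]
      field_simp
      norm_num
    have hμord : addOrderOf μ = n := by
      have h1 : addOrderOf μ ∣ n := addOrderOf_dvd_of_nsmul_eq_zero hμt
      have h2 : n ∣ addOrderOf μ := by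
        rw [hn, hk]
        exact addOrderOf_smul_dvd k
      exact Nat.dvd_antisymm h1 h2
    have gcd_one : ∀ m : ℕ, addOrderOf (m • μ) = n → Nat.Coprime m n := by
      intro m hm
      have hm0 : m ≠ 0 := by
        rintro rfl
        rw [zero_nsmul, addOrderOf_zero] at hm
        omega
      have h1 := addOrderOf_nsmul' μ hm0
      rw [hm, hμord] at h1
      -- n = n / gcd n m
      have hg : Nat.gcd n m ∣ n := Nat.gcd_dvd_left n m
      have h2 : n / Nat.gcd n m * Nat.gcd n m = n := Nat.div_mul_cancel hg
      rw [← h1] at h2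
      have h3 : Nat.gcd n m = 1 :=
        Nat.eq_of_mul_eq_mul_left hnpos (h2.trans (mul_one n).symm)
      exact Nat.Coprime.symm h3
    have hkcop : Nat.Coprime k n := gcd_one k (by rw [← hk, ← hn])
    have hlcop : Nat.Coprime l n := gcd_one l (by rw [← hl, ← h])
    -- build the multiplier c
    have hkU : IsUnit ((k : ℕ) : ZMod n) := (ZMod.isUnit_iff_coprime k n).2 hkcop
    have hlU : IsUnit ((l : ℕ) : ZMod n) := (ZMod.isUnit_iff_coprime l n).2 hlcop
    set u : ZMod n := ((l : ℕ) : ZMod n) * ((k : ℕ) : ZMod n)⁻¹ with hu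
    have huU : IsUnit u := hlU.mul (IsUnit.of_mul_eq_one _ (ZMod.inv_mul_of_unit _ hkU))
    set c : ℕ := u.val with hcdef
    have hcu : ((c : ℕ) : ZMod n) = u := by rw [hcdef, ZMod.natCast_val, ZMod.cast_id]
    have hccop : IsCoprime ((c : ℕ) : ℤ) ((n : ℕ) : ℤ) := by
      apply isCoprime_of_isUnit_zmod hnpos
      rw [Int.cast_natCast, hcu]
      exact huU
    obtain ⟨g, hg⟩ := exists_aut n hnpos ((c : ℕ) : ℤ) hccop
    refine ⟨g, ?_⟩
    rw [hg γ hγt, natCast_zsmul]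
    -- show c • γ = δ
    have hdvd : ((n : ℕ) : ℤ) ∣ ((c * k : ℕ) : ℤ) - ((l : ℕ) : ℤ) := by
      rw [← ZMod.intCast_zmod_eq_zero_iff_dvd]
      push_cast
      rw [hcu, hu, mul_assoc, ZMod.inv_mul_of_unit _ hkU, mul_one, sub_self]
    have hz : (((c * k : ℕ) : ℤ) - ((l : ℕ) : ℤ)) • μ = 0 := by
      apply addOrderOf_dvd_iff_zsmul_eq_zero.1
      rw [hμord]
      exact hdvd
    rw [sub_smul, sub_eq_zero, natCast_zsmul, natCast_zsmul] at hz
    rw [hk, hl, ← mul_nsmul']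
    exact hz

lemma T_rho (g : QZ ≃+ QZ) (T : RQZ →ₗ[ℤ] RQZ) (hT : ∀ γ : QZ, T (e γ) = e (g γ))
    (n : ℕ) (hn : 0 < n) : T (rhoE n) = rhoE n := by
  rw [rhoE_eq_sum n hn, map_sum]
  simp_rw [hT]
  apply Finset.sum_nbij' (i := fun γ => g γ) (j := fun γ => g.symm γ)
  · intro a ha
    rw [Set.Finite.mem_toFinset] at *
    rw [Set.mem_setOf_eq] at *
    exact (addOrderOf_injective g.toAddMonoidHom g.injective a).trans ha
  · intro a ha
    rw [Set.Finite.mem_toFinset] at *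
    rw [Set.mem_setOf_eq] at *
    exact (addOrderOf_injective g.symm.toAddMonoidHom g.symm.injective a).trans ha
  · intro a _; simp
  · intro a _; simp
  · intro a _; rfl

lemma span_of_const (N : ℕ) : ∀ x : RQZ, x.coeff.support.card ≤ N →
    (∀ γ δ : QZ, addOrderOf γ = addOrderOf δ → x.coeff γ = x.coeff δ) →
    x ∈ Submodule.span ℤ {y : RQZ | ∃ n : ℕ, 0 < n ∧ y = rhoE n} := by
  induction N with
  | zero =>
    intro x hcard _
    have : x.coeff = 0 := by
      rw [← Finsupp.support_eq_empty]
      exact Finset.card_eq_zero.1 (Nat.le_zero.1 hcard)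
    rw [show x = 0 from AddMonoidAlgebra.coeff_eq_zero.1 this]
    exact Submodule.zero_mem _
  | succ N ih =>
    intro x hcard hx
    rcases Finset.eq_empty_or_nonempty x.coeff.support with hemp | ⟨γ, hγ⟩
    · have : x.coeff = 0 := Finsupp.support_eq_empty.1 hemp
      rw [show x = 0 from AddMonoidAlgebra.coeff_eq_zero.1 this]
      exact Submodule.zero_mem _
    · set d := addOrderOf γ with hd
      have hdpos : 0 < d := QZ.addOrderOf_pos γ
      set x' : RQZ := x - x.coeff γ • rhoE d with hx'
      have happly : ∀ δ : QZ, x'.coeff δ =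
          x.coeff δ - x.coeff γ * (if addOrderOf δ = d then 1 else 0) := by
        intro δ
        rw [hx']
        rw [show (x - x.coeff γ • rhoE d : RQZ).coeff δ
            = x.coeff δ - (x.coeff γ • rhoE d).coeff δ from rfl]
        rw [show (x.coeff γ • rhoE d).coeff δ
            = x.coeff γ * (rhoE d).coeff δ from rfl]
        rw [rhoE_apply d hdpos δ]
      have hsub : x'.coeff.support ⊆ x.coeff.support.erase γ := by
        intro δ hδ
        rw [Finsupp.mem_support_iff] at hδ
        rw [happly δ] at hδ
        by_cases hord : addOrderOf δ = d
        · exfalso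
          rw [if_pos hord, mul_one] at hδ
          exact hδ (by rw [hx γ δ (hd ▸ hord.symm)]; ring)
        · rw [if_neg hord, mul_zero, sub_zero] at hδ
          refine Finset.mem_erase.2 ⟨?_, Finsupp.mem_support_iff.2 hδ⟩
          rintro rfl
          exact hord rfl
      have hcard' : x'.coeff.support.card ≤ N := by
        have h1 := Finset.card_le_card hsub
        have h2 : (x.coeff.support.erase γ).card < x.coeff.support.card :=
          Finset.card_erase_lt_of_mem hγ
        omega
      have hx'const : ∀ γ' δ' : QZ, addOrderOf γ' = addOrderOf δ' →
          x'.coeff γ' = x'.coeff δ' := by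
        intro γ' δ' hord
        rw [happly, happly, hx γ' δ' hord, hord]
      have hmem := ih x' hcard' hx'const
      have hrho : rhoE d ∈ Submodule.span ℤ {y : RQZ | ∃ n : ℕ, 0 < n ∧ y = rhoE n} :=
        Submodule.subset_span ⟨d, hdpos, rfl⟩
      have : x = x' + x.coeff γ • rhoE d := by rw [hx']; ring
      rw [this]
      exact Submodule.add_mem _ hmem (Submodule.smul_mem _ _ hrho)

/-- An element of `ℤ[ℚ/ℤ]` is fixed by every automorphism of `ℚ/ℤ`
(acting on basis elements by `e γ ↦ e (g γ)`) if and only if it lies in the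
ℤ-linear span of the elements `ρ(n)`, `n ≥ 1`. -/
theorem fixed_iff_span_rho (x : RQZ) :
    (∀ (g : QZ ≃+ QZ) (T : RQZ →ₗ[ℤ] RQZ),
        (∀ γ : QZ, T (e γ) = e (g γ)) → T x = x) ↔
      x ∈ Submodule.span ℤ {y : RQZ | ∃ n : ℕ, 0 < n ∧ y = rhoE n} := by
  constructor
  · intro h
    have hconst : ∀ γ δ : QZ, addOrderOf γ = addOrderOf δ →
        x.coeff γ = x.coeff δ := by
      intro γ δ hord
      obtain ⟨g, hg⟩ := exists_aut_map hord
      have hT : ∀ γ' : QZ, ((AddMonoidAlgebra.mapDomainAddEquiv ℤ g.toEquiv).toAddMonoidHom.toIntLinearMap : RQZ →ₗ[ℤ] RQZ) (e γ') = e (g γ') := by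
        intro γ'
        exact AddMonoidAlgebra.mapDomainAddEquiv_single _ _ _
      have := h g _ hT
      have h2 : (Finsupp.mapDomain ⇑g x.coeff) (g γ) = x.coeff γ :=
        Finsupp.mapDomain_apply g.injective _ γ
      have h3 : Finsupp.mapDomain ⇑g x.coeff = x.coeff := congrArg AddMonoidAlgebra.coeff this
      rw [← hg, ← h2, h3]
    exact span_of_const x.coeff.support.card x le_rfl hconst
  · intro h g T hT
    have : Submodule.span ℤ {y : RQZ | ∃ n : ℕ, 0 < n ∧ y = rhoE n} ≤
        LinearMap.eqLocus T (LinearMap.id : RQZ →ₗ[ℤ] RQZ) := by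
      rw [Submodule.span_le]
      rintro y ⟨n, hn, rfl⟩
      show T (rhoE n) = LinearMap.id (rhoE n)
      rw [T_rho g T hT n hn, LinearMap.id_apply]
    have := this h
    exact this
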